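/- Let M N : ℕ be positive, A : Matrix (Fin M) (Fin M) ℝ, B : Matrix (Fin N) (Fin N) ℝ, μ : Fin M → ℝ and ω : Fin N → ℝ. Suppose φ : ℝ → Fin M → ℝ satisfies, for every t : ℝ and l : Fin M, HasDerivAt (fun s => φ s l) (μ l + ∑ k, A l k * Real.sin (φ t k - φ t l)) t, and ψ : ℝ → Fin N → ℝ satisfies, for every t : ℝ and i : Fin N, HasDerivAt (fun s => ψ s i) (ω i + ∑ j, B i j * Real.sin (ψ t j - ψ t i)) t. Define θ : ℝ → Fin M × Fin N → ℝ by θ t (l, i) = φ t l + ψ t i. Then for every t : ℝ and every (l, i) : Fin M × Fin N, HasDerivAt (fun s => θ s (l, i)) (μ l + ω i + ∑ p : Fin M × Fin N, (A ⊞ B) (l, i) p * Real.sin (θ t p - θ t (l, i))) t. -/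

import Mathlib

/-- The Kronecker sum `A ⊞ B = A ⊗ I_N + I_M ⊗ B` of two square matrices. -/
def kronSum {M N : ℕ} (A : Matrix (Fin M) (Fin M) ℝ) (B : Matrix (Fin N) (Fin N) ℝ) :
    Matrix (Fin M × Fin N) (Fin M × Fin N) ℝ :=
  fun p q => (if p.2 = q.2 then A p.1 q.1 else 0) + (if p.1 = q.1 then B p.2 q.2 else 0)

theorem composed_trajectory_solves_multiplex_kuramoto
    (M N : ℕ) (hM : 0 < M) (hN : 0 < N)
    (A : Matrix (Fin M) (Fin M) ℝ) (B : Matrix (Fin N) (Fin N) ℝ)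
    (μ : Fin M → ℝ) (ω : Fin N → ℝ)
    (φ : ℝ → Fin M → ℝ) (ψ : ℝ → Fin N → ℝ)
    (hφ : ∀ (t : ℝ) (l : Fin M),
      HasDerivAt (fun s => φ s l) (μ l + ∑ k, A l k * Real.sin (φ t k - φ t l)) t)
    (hψ : ∀ (t : ℝ) (i : Fin N),
      HasDerivAt (fun s => ψ s i) (ω i + ∑ j, B i j * Real.sin (ψ t j - ψ t i)) t)
    (θ : ℝ → Fin M × Fin N → ℝ)
    (hθ : ∀ (t : ℝ) (l : Fin M) (i : Fin N), θ t (l, i) = φ t l + ψ t i) :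
    ∀ (t : ℝ) (l : Fin M) (i : Fin N),
      HasDerivAt (fun s => θ s (l, i))
        (μ l + ω i +
          ∑ p : Fin M × Fin N, kronSum A B (l, i) p * Real.sin (θ t p - θ t (l, i))) t := by
  intro t l i
  have hfun : (fun s => θ s (l, i)) = fun s => φ s l + ψ s i := funext fun s => hθ s l i
  have h := (hφ t l).add (hψ t i)
  rw [hfun]
  refine h.congr_deriv ?_
  have hsum : ∑ p : Fin M × Fin N, kronSum A B (l, i) p * Real.sin (θ t p - θ t (l, i))
      = (∑ k, A l k * Real.sin (φ t k - φ t l)) + (∑ j, B i j * Real.sin (ψ t j - ψ t i)) := by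
    rw [Fintype.sum_prod_type]
    simp only [kronSum, hθ, add_mul, ite_mul, zero_mul, Finset.sum_add_distrib,
      Finset.sum_ite_eq', Finset.sum_ite_eq, Finset.mem_univ, if_true]
    congr 1
    · apply Finset.sum_congr rfl
      intro k _
      ring_nf
    · rw [Finset.sum_comm]
      simp only [Finset.sum_ite_eq, Finset.mem_univ, if_true]
      apply Finset.sum_congr rfl
      intro j _
      ring_nf
  rw [hsum]; ring
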